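/- Let λ be a partition of n and let I_λ be the ℂ-linear span in R = ℂ[x,y] of the monomials x^a y^b with b ≥ λ_{a+1}, where λ_1 ≥ λ_2 ≥ … are the parts of λ extended by zeros (i.e. the monomials whose cell (a,b) lies outside the Young diagram {(a,b) ∈ ℕ² : b < λ_{a+1}} of λ). Then I_λ is an ideal of R, dim_ℂ R/I_λ = n, and dim_ℂ I_λ/(𝔪·I_λ) = d(λ) + 1, where d(λ) is the number of distinct part sizes of λ. That is, the minimal number of generators of the monomial ideal I_λ equals the number of concave corners of the Young diagram of λ. -/

import Mathlib

open MvPolynomial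

noncomputable section

/-- The polynomial ring `R = ℂ[x,y]`. -/
abbrev Rpoly : Type := MvPolynomial (Fin 2) ℂ

/-- The maximal ideal `𝔪 = ⟨x, y⟩` of `R` at the origin. -/
def mIdeal : Ideal Rpoly := Ideal.span {X 0, X 1}

/-- `μ(I) = dim_ℂ I/(𝔪·I)`, computed as the ℂ-dimension of the image of `I`
in `R/(𝔪·I)`. -/
noncomputable def mu (I : Ideal Rpoly) : ℕ :=
  Module.finrank ℂ
    (Submodule.restrictScalars ℂ (I.map (Ideal.Quotient.mk (mIdeal * I))))

/-- The ℂ-linear span `I_λ` of the monomials `x^a y^b` with `b ≥ λ_{a+1}`, i.e. those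
whose cell `(a,b)` lies outside the Young diagram of `λ`.  Here `b ≥ λ_{a+1}` is
expressed equivalently as: the number of parts of `λ` exceeding `b` is at most `a`. -/
noncomputable def youngSpan (n : ℕ) (lam : n.Partition) : Submodule ℂ Rpoly :=
  Submodule.span ℂ {p : Rpoly | ∃ a b : ℕ,
    Multiset.card (lam.parts.filter (fun s => b < s)) ≤ a ∧ p = X 0 ^ a * X 1 ^ b}

namespace YoungAux

/-! ### Pairs of exponents as finitely supported functions -/

def psi (a b : ℕ) : Fin 2 →₀ ℕ := Finsupp.single 0 a + Finsupp.single 1 b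

@[simp] lemma psi_zero (a b : ℕ) : psi a b 0 = a := by
  simp [psi, Finsupp.single_apply]

@[simp] lemma psi_one (a b : ℕ) : psi a b 1 = b := by
  simp [psi, Finsupp.single_apply]

lemma eq_psi (d : Fin 2 →₀ ℕ) : d = psi (d 0) (d 1) := by
  ext i
  fin_cases i <;> simp [psi, Finsupp.single_apply]

lemma psi_add (a b a' b' : ℕ) : psi a b + psi a' b' = psi (a + a') (b + b') := by
  ext i; fin_cases i <;> simp

lemma monomial_psi (a b : ℕ) (c : ℂ) :
    monomial (psi a b) c = c • (X 0 ^ a * X 1 ^ b) := by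
  rw [X_pow_eq_monomial, X_pow_eq_monomial, monomial_mul, one_mul, smul_monomial,
    smul_eq_mul, mul_one]
  rfl

lemma X_eq (i : Fin 2) : (X i : Rpoly) = monomial (Finsupp.single i 1) 1 := by
  rw [← X_pow_eq_monomial, pow_one]

lemma monomial_eq_X_mul {i : Fin 2} {w d : Fin 2 →₀ ℕ}
    (h : d = Finsupp.single i 1 + w) (c : ℂ) :
    monomial d c = X i * monomial w c := by
  rw [X_eq, monomial_mul, one_mul, ← h]

/-! ### Monomial ideals from upward closed sets of exponents -/

def UpSet (S : Set (Fin 2 →₀ ℕ)) : Prop := ∀ ⦃d⦄, d ∈ S → ∀ e, d + e ∈ S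

def midl (S : Set (Fin 2 →₀ ℕ)) (hS : UpSet S) : Ideal Rpoly where
  carrier := {p : Rpoly | ↑p.support ⊆ S}
  zero_mem' := by simp
  add_mem' {p q} hp hq := by
    classical
    refine subset_trans (Finset.coe_subset.2 Finsupp.support_add) ?_
    rw [Finset.coe_union]; exact Set.union_subset hp hq
  smul_mem' p q hq := by
    classical
    refine subset_trans (Finset.coe_subset.2 (MvPolynomial.support_mul p q)) ?_
    intro d hd
    rw [Finset.coe_add] at hd
    rcases hd with ⟨u, hu, v, hv, rfl⟩
    show u + v ∈ S
    rw [add_comm]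
    exact hS (hq hv) u

lemma mem_midl {S : Set (Fin 2 →₀ ℕ)} {hS : UpSet S} {p : Rpoly} :
    p ∈ midl S hS ↔ ↑p.support ⊆ S := Iff.rfl

lemma restrict_midl (S : Set (Fin 2 →₀ ℕ)) (hS : UpSet S) :
    Submodule.restrictScalars ℂ (midl S hS) = MvPolynomial.restrictSupport ℂ S := by
  ext p; rfl

lemma monomial_mem_midl {S : Set (Fin 2 →₀ ℕ)} {hS : UpSet S} {d : Fin 2 →₀ ℕ}
    (hd : d ∈ S) (c : ℂ) : monomial d c ∈ midl S hS := by
  rw [mem_midl]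
  refine subset_trans (Finset.coe_subset.2 support_monomial_subset) ?_
  simpa using hd

lemma mem_of_support {p : Rpoly} (N : Submodule ℂ Rpoly)
    (h : ∀ d ∈ p.support, monomial d (coeff d p) ∈ N) : p ∈ N := by
  rw [p.as_sum]
  exact Submodule.sum_mem N h

/-! ### Counting combinatorics -/

def fc (m : Multiset ℕ) (b : ℕ) : ℕ := Multiset.card (m.filter (fun s => b < s))

lemma fc_anti (m : Multiset ℕ) {b b' : ℕ} (h : b ≤ b') : fc m b' ≤ fc m b :=
  Multiset.card_le_card (Multiset.monotone_filter_right m (fun s hs => lt_of_le_of_lt h hs))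

lemma fc_succ (m : Multiset ℕ) (b : ℕ) :
    fc m b = fc m (b + 1) + m.count (b + 1) := by
  classical
  have h := Multiset.filter_add_filter (fun s => b + 1 < s) (fun s => s = b + 1) m
  have h1 : Multiset.filter (fun s => b + 1 < s ∨ s = b + 1) m
      = Multiset.filter (fun s => b < s) m := by
    apply Multiset.filter_congr; intro x _; constructor
    · rintro (h | rfl) <;> omega
    · intro h; omega
  have h2 : Multiset.filter (fun s => (b + 1 < s) ∧ s = b + 1) m = 0 := by
    rw [Multiset.filter_eq_nil]; rintro x _ ⟨h, rfl⟩; omega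
  rw [h1, h2, add_zero] at h
  have h3 : Multiset.card (Multiset.filter (fun s => s = b + 1) m) = m.count (b + 1) := by
    rw [Multiset.count_eq_card_filter_eq]
    congr 1; apply Multiset.filter_congr; intro x _; exact eq_comm
  calc fc m b = Multiset.card (Multiset.filter (fun s => b + 1 < s) m
        + Multiset.filter (fun s => s = b + 1) m) := by rw [h]; rfl
    _ = fc m (b + 1) + m.count (b + 1) := by rw [Multiset.card_add, h3]; rfl

lemma sum_fc (m : Multiset ℕ) (N : ℕ) (h : ∀ s ∈ m, s ≤ N) :
    ∑ b ∈ Finset.range N, fc m b = m.sum := by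
  classical
  induction m using Multiset.induction_on with
  | empty => simp [fc]
  | cons a m ih =>
    have ha : a ≤ N := h a (Multiset.mem_cons_self a m)
    have hsum : ∑ b ∈ Finset.range N, (if b < a then 1 else 0) = a := by
      rw [Finset.sum_boole]
      have : Finset.filter (fun b => b < a) (Finset.range N) = Finset.range a := by
        ext b; simp only [Finset.mem_filter, Finset.mem_range]; omega
      simp [this]
    have hfc : ∀ b, fc (a ::ₘ m) b = (if b < a then 1 else 0) + fc m b := by
      intro b
      simp only [fc, Multiset.filter_cons, Multiset.card_add]
      congr 1
      split <;> simp
    simp only [hfc, Finset.sum_add_distrib, hsum, Multiset.sum_cons,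
      ih (fun s hs => h s (Multiset.mem_cons_of_mem hs))]

/-! ### The exponent sets -/

variable (m : Multiset ℕ)

def Sset : Set (Fin 2 →₀ ℕ) := {d | fc m (d 1) ≤ d 0}

def Tset : Set (Fin 2 →₀ ℕ) :=
  {d | (1 ≤ d 0 ∧ fc m (d 1) ≤ d 0 - 1) ∨ (1 ≤ d 1 ∧ fc m (d 1 - 1) ≤ d 0)}

lemma Sset_up : UpSet (Sset m) := by
  intro d hd e
  have h1 : fc m ((d + e) 1) ≤ fc m (d 1) := fc_anti m (by simp)
  have h2 : (d : Fin 2 →₀ ℕ) 0 ≤ (d + e) 0 := by simp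
  exact le_trans (le_trans h1 hd) h2

lemma Tset_up : UpSet (Tset m) := by
  rintro d (⟨h1, h2⟩ | ⟨h1, h2⟩) e
  · left
    constructor
    · simp only [Finsupp.add_apply]; omega
    · have : fc m ((d + e) 1) ≤ fc m (d 1) := fc_anti m (by simp)
      simp only [Finsupp.add_apply] at *; omega
  · right
    constructor
    · simp only [Finsupp.add_apply]; omega
    · have : fc m ((d + e) 1 - 1) ≤ fc m (d 1 - 1) := by
        apply fc_anti m; simp only [Finsupp.add_apply]; omega
      simp only [Finsupp.add_apply] at *; omega

lemma Tset_subset_Sset : Tset m ⊆ Sset m := by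
  rintro d (⟨h1, h2⟩ | ⟨h1, h2⟩)
  · exact le_trans h2 (by omega)
  · exact le_trans (fc_anti m (by omega)) h2

def S0 : Set (Fin 2 →₀ ℕ) := {d | d ≠ 0}

lemma S0_up : UpSet S0 := by
  intro d hd e h0
  apply hd
  ext i
  have := DFunLike.congr_fun h0 i
  simp only [Finsupp.add_apply, Finsupp.coe_zero, Pi.zero_apply] at this ⊢
  omega

/-! ### Ideal identities -/

lemma mIdeal_eq : mIdeal = midl S0 S0_up := by
  apply le_antisymm
  · rw [mIdeal, Ideal.span_le]
    rintro p (rfl | rfl) <;>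
    · rw [X_eq]
      exact monomial_mem_midl
        (show _ ∈ S0 from by simp [S0, Finsupp.single_eq_zero]) 1
  · intro p hp
    apply mem_of_support (Submodule.restrictScalars ℂ mIdeal)
    intro d hd
    have hd0 : d ≠ 0 := hp hd
    have : 1 ≤ d 0 ∨ 1 ≤ d 1 := by
      by_contra hcon
      push_neg at hcon
      apply hd0; ext i; fin_cases i <;> simp <;> omega
    have hX0 : (X 0 : Rpoly) ∈ mIdeal := Ideal.subset_span (Set.mem_insert _ _)
    have hX1 : (X 1 : Rpoly) ∈ mIdeal := Ideal.subset_span (Set.mem_insert_of_mem _ rfl)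
    rcases this with h | h
    · have hdec : d = Finsupp.single 0 1 + psi (d 0 - 1) (d 1) := by
        rw [show (Finsupp.single 0 1 : Fin 2 →₀ ℕ) = psi 1 0 by simp [psi], psi_add]
        rw [eq_psi d]; congr 1 <;> simp <;> omega
      rw [monomial_eq_X_mul hdec]
      exact Ideal.mul_mem_right _ _ hX0
    · have hdec : d = Finsupp.single 1 1 + psi (d 0) (d 1 - 1) := by
        rw [show (Finsupp.single 1 1 : Fin 2 →₀ ℕ) = psi 0 1 by simp [psi], psi_add]
        rw [eq_psi d]; congr 1 <;> simp <;> omega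
      rw [monomial_eq_X_mul hdec]
      exact Ideal.mul_mem_right _ _ hX1

lemma mul_midl : mIdeal * midl (Sset m) (Sset_up m) = midl (Tset m) (Tset_up m) := by
  apply le_antisymm
  · rw [Ideal.mul_le]
    intro r hr s hs
    classical
    rw [mem_midl]
    refine subset_trans (Finset.coe_subset.2 (MvPolynomial.support_mul r s)) ?_
    intro d hd
    rw [Finset.coe_add] at hd
    rcases hd with ⟨u, hu, v, hv, rfl⟩
    show u + v ∈ Tset m
    rw [mIdeal_eq] at hr
    have hu0 : u ≠ 0 := hr hu
    have hvS : fc m (v 1) ≤ v 0 := hs hv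
    have : 1 ≤ u 0 ∨ 1 ≤ u 1 := by
      by_contra hcon
      push_neg at hcon
      apply hu0; ext i; fin_cases i <;> simp <;> omega
    rcases this with h | h
    · left
      have : fc m ((u + v) 1) ≤ fc m (v 1) := fc_anti m (by simp)
      simp only [Finsupp.add_apply] at *
      omega
    · right
      have : fc m ((u + v) 1 - 1) ≤ fc m (v 1) := by
        apply fc_anti m; simp only [Finsupp.add_apply]; omega
      simp only [Finsupp.add_apply] at *
      omega
  · intro p hp
    apply mem_of_support
      (Submodule.restrictScalars ℂ (mIdeal * midl (Sset m) (Sset_up m)))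
    intro d hd
    have hX0 : (X 0 : Rpoly) ∈ mIdeal := Ideal.subset_span (Set.mem_insert _ _)
    have hX1 : (X 1 : Rpoly) ∈ mIdeal := Ideal.subset_span (Set.mem_insert_of_mem _ rfl)
    rcases hp hd with ⟨h1, h2⟩ | ⟨h1, h2⟩
    · have hdec : d = Finsupp.single 0 1 + psi (d 0 - 1) (d 1) := by
        rw [show (Finsupp.single 0 1 : Fin 2 →₀ ℕ) = psi 1 0 by simp [psi], psi_add]
        rw [eq_psi d]; congr 1 <;> simp <;> omega
      rw [monomial_eq_X_mul hdec]
      exact Ideal.mul_mem_mul hX0 (monomial_mem_midl (by simp only [Sset, Set.mem_setOf_eq, psi_zero, psi_one]; exact h2) _)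
    · have hdec : d = Finsupp.single 1 1 + psi (d 0) (d 1 - 1) := by
        rw [show (Finsupp.single 1 1 : Fin 2 →₀ ℕ) = psi 0 1 by simp [psi], psi_add]
        rw [eq_psi d]; congr 1 <;> simp <;> omega
      rw [monomial_eq_X_mul hdec]
      exact Ideal.mul_mem_mul hX1 (monomial_mem_midl (by simp only [Sset, Set.mem_setOf_eq, psi_zero, psi_one]; exact h2) _)


/-! ### youngSpan is the supported module -/

lemma youngSpan_eq (n : ℕ) (lam : n.Partition) :
    youngSpan n lam = MvPolynomial.restrictSupport ℂ (Sset lam.parts) := by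
  apply le_antisymm
  · rw [youngSpan, Submodule.span_le]
    rintro p ⟨a, b, hab, rfl⟩
    rw [SetLike.mem_coe, MvPolynomial.mem_restrictSupport_iff]
    have hmon : (X 0 ^ a * X 1 ^ b : Rpoly) = monomial (psi a b) 1 := by
      rw [monomial_psi, one_smul]
    rw [hmon]
    refine subset_trans (Finset.coe_subset.2 support_monomial_subset) ?_
    intro d hd
    simp only [Finset.coe_singleton, Set.mem_singleton_iff] at hd
    subst hd
    show fc lam.parts (psi a b 1) ≤ psi a b 0
    simpa [fc] using hab
  · intro p hp
    apply mem_of_support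
    intro d hd
    have hdS : fc lam.parts (d 1) ≤ d 0 := hp hd
    rw [eq_psi d, monomial_psi]
    exact Submodule.smul_mem _ _ (Submodule.subset_span ⟨d 0, d 1, hdS, rfl⟩)

/-! ### finrank of supported modules on finite sets of exponents -/

lemma pair_injOn (C : Set (ℕ × ℕ)) : Set.InjOn (fun q : ℕ × ℕ => psi q.1 q.2) C := by
  intro q _ q' _ h
  have h0 := congrArg (fun d : Fin 2 →₀ ℕ => d 0) h
  have h1 := congrArg (fun d : Fin 2 →₀ ℕ => d 1) h
  simp only [psi_zero, psi_one] at h0 h1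
  exact Prod.ext h0 h1

lemma finrank_supported_eq_card (C : Finset (ℕ × ℕ)) (s : Set (Fin 2 →₀ ℕ))
    (h : s = (fun q : ℕ × ℕ => psi q.1 q.2) '' ↑C) :
    Module.finrank ℂ (MvPolynomial.restrictSupport ℂ s) = C.card := by
  subst h
  let e : ↥(↑C : Set (ℕ × ℕ)) ≃ ↥((fun q : ℕ × ℕ => psi q.1 q.2) '' ↑C) :=
    Equiv.Set.imageOfInjOn _ _ (pair_injOn ↑C)
  have eq1 := (MvPolynomial.basisRestrictSupport ℂ
      ((fun q : ℕ × ℕ => psi q.1 q.2) '' ↑C)).repr.trans (Finsupp.domLCongr e.symm)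
  rw [eq1.finrank_eq, Module.finrank_finsupp_self]
  simpa using Fintype.card_coe C

lemma restrictSupport_union (s t : Set (Fin 2 →₀ ℕ)) :
    MvPolynomial.restrictSupport ℂ (s ∪ t)
      = MvPolynomial.restrictSupport ℂ s ⊔ MvPolynomial.restrictSupport ℂ t := by
  simp only [MvPolynomial.restrictSupport, AddMonoidAlgebra.supported_eq_map,
    Finsupp.supported_union, Submodule.map_sup]

lemma isCompl_supported (s : Set (Fin 2 →₀ ℕ)) :
    IsCompl (MvPolynomial.restrictSupport ℂ s) (MvPolynomial.restrictSupport ℂ sᶜ) := by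
  constructor
  · rw [Submodule.disjoint_def]
    intro x h1 h2
    rw [MvPolynomial.mem_restrictSupport_iff] at h1 h2
    rw [← MvPolynomial.support_eq_empty]
    exact Finset.eq_empty_iff_forall_notMem.2 fun d hd => h2 hd (h1 hd)
  · rw [codisjoint_iff, ← restrictSupport_union, Set.union_compl_self,
      MvPolynomial.restrictSupport_univ]

/-! ### The diagram: complement of `Sset` -/

def Dfin (m : Multiset ℕ) (N : ℕ) : Finset (ℕ × ℕ) :=
  (Finset.range N).biUnion (fun b => (Finset.range (fc m b)).image (fun a => (a, b)))

lemma Dfin_card (m : Multiset ℕ) (N : ℕ) :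
    (Dfin m N).card = ∑ b ∈ Finset.range N, fc m b := by
  rw [Dfin, Finset.card_biUnion]
  · exact Finset.sum_congr rfl fun b _ => by
      rw [Finset.card_image_of_injective _ (fun a a' h => by simpa using h),
        Finset.card_range]
  · intro b _ b' _ hne
    refine Finset.disjoint_left.2 fun q hq hq' => ?_
    simp only [Finset.mem_image, Finset.mem_range] at hq hq'
    obtain ⟨a, _, rfl⟩ := hq
    obtain ⟨a', _, h⟩ := hq'
    exact hne (congrArg Prod.snd h).symm

lemma compl_Sset_eq (n : ℕ) (lam : n.Partition) :
    (Sset lam.parts)ᶜ = (fun q : ℕ × ℕ => psi q.1 q.2) '' ↑(Dfin lam.parts n) := by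
  ext d
  simp only [Set.mem_compl_iff, Sset, Set.mem_setOf_eq, not_le, Set.mem_image,
    Finset.mem_coe, Dfin, Finset.mem_biUnion, Finset.mem_range, Finset.mem_image]
  constructor
  · intro h
    have hpos : 0 < fc lam.parts (d 1) := lt_of_le_of_lt (Nat.zero_le _) h
    obtain ⟨s, hs⟩ := Multiset.card_pos_iff_exists_mem.1 hpos
    rw [Multiset.mem_filter] at hs
    have hsn : s ≤ n := by
      rw [← lam.parts_sum]
      exact Multiset.single_le_sum (fun x _ => Nat.zero_le x) s hs.1
    exact ⟨(d 0, d 1), ⟨d 1, by omega, d 0, h, rfl⟩, (eq_psi d).symm⟩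
  · rintro ⟨q, ⟨b, hb, a, ha, rfl⟩, rfl⟩
    simpa using ha

/-! ### The corners: `Sset \ Tset` -/

def Cfin (m : Multiset ℕ) : Finset (ℕ × ℕ) :=
  (insert 0 m.toFinset).image (fun b => (fc m b, b))

lemma Cfin_card (n : ℕ) (lam : n.Partition) :
    (Cfin lam.parts).card = lam.parts.toFinset.card + 1 := by
  rw [Cfin, Finset.card_image_of_injOn (fun b _ b' _ h => congrArg Prod.snd h),
    Finset.card_insert_of_notMem, Nat.add_comm]
  rw [Multiset.mem_toFinset]
  intro h
  exact absurd (lam.parts_pos h) (lt_irrefl 0)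

lemma diff_eq (n : ℕ) (lam : n.Partition) :
    Sset lam.parts \ Tset lam.parts
      = (fun q : ℕ × ℕ => psi q.1 q.2) '' ↑(Cfin lam.parts) := by
  ext d
  constructor
  · rintro ⟨hS, hT⟩
    rw [Sset, Set.mem_setOf_eq] at hS
    rw [Tset, Set.mem_setOf_eq] at hT
    push_neg at hT
    have ha : fc lam.parts (d 1) = d 0 := by
      by_cases h0 : 1 ≤ d 0
      · have := hT.1 h0; omega
      · omega
    have hb : d 1 = 0 ∨ d 1 ∈ lam.parts.toFinset := by
      by_cases hb0 : d 1 = 0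
      · exact Or.inl hb0
      · right
        have h1 : 1 ≤ d 1 := Nat.one_le_iff_ne_zero.2 hb0
        have h2 := hT.2 h1
        have h3 := fc_succ lam.parts (d 1 - 1)
        rw [Nat.sub_add_cancel h1] at h3
        rw [Multiset.mem_toFinset, ← Multiset.count_pos]
        omega
    refine ⟨(d 0, d 1), ?_, (eq_psi d).symm⟩
    rw [Finset.mem_coe, Cfin, Finset.mem_image]
    exact ⟨d 1, by simpa [Finset.mem_insert] using hb, by rw [ha]⟩
  · rintro ⟨q, hq, rfl⟩
    rw [Finset.mem_coe, Cfin, Finset.mem_image] at hq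
    obtain ⟨b, hb, rfl⟩ := hq
    constructor
    · show fc lam.parts (psi (fc lam.parts b) b 1) ≤ psi (fc lam.parts b) b 0
      simp
    · simp only [Tset, Set.mem_setOf_eq, psi_zero, psi_one, not_or, not_and, not_le]
      constructor
      · intro h1; omega
      · intro h1
        rcases Finset.mem_insert.1 hb with rfl | hbm
        · omega
        · have hbm' := Multiset.mem_toFinset.1 hbm
          have hb1 : 1 ≤ b := lam.parts_pos hbm'
          have h3 := fc_succ lam.parts (b - 1)
          rw [Nat.sub_add_cancel hb1] at h3
          have hc : 0 < Multiset.count b lam.parts := Multiset.count_pos.2 hbm'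
          omega

/-! ### Main computations -/

lemma finrank_quotient_eq (n : ℕ) (lam : n.Partition) :
    Module.finrank ℂ (Rpoly ⧸ midl (Sset lam.parts) (Sset_up lam.parts)) = n := by
  set I := midl (Sset lam.parts) (Sset_up lam.parts) with hI
  have hle : ∀ s ∈ lam.parts, s ≤ n := by
    intro s hs
    rw [← lam.parts_sum]
    exact Multiset.single_le_sum (fun x _ => Nat.zero_le x) s hs
  rw [LinearEquiv.finrank_eq (Submodule.Quotient.restrictScalarsEquiv ℂ I).symm,
    hI, restrict_midl,
    LinearEquiv.finrank_eq
      (Submodule.quotientEquivOfIsCompl _ _ (isCompl_supported (Sset lam.parts))),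
    finrank_supported_eq_card (Dfin lam.parts n) _ (compl_Sset_eq n lam),
    Dfin_card, sum_fc lam.parts n hle, lam.parts_sum]

lemma mu_eq (n : ℕ) (lam : n.Partition) :
    mu (midl (Sset lam.parts) (Sset_up lam.parts)) = lam.parts.toFinset.card + 1 := by
  classical
  set I : Ideal Rpoly := midl (Sset lam.parts) (Sset_up lam.parts) with hI
  have hresI : Submodule.restrictScalars ℂ I =
      MvPolynomial.restrictSupport ℂ (Sset lam.parts) := by
    rw [hI, restrict_midl]
  have hJT : Submodule.restrictScalars ℂ (mIdeal * I) =
      MvPolynomial.restrictSupport ℂ (Tset lam.parts) := by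
    rw [hI, mul_midl, restrict_midl]
  set mkl : Rpoly →ₗ[ℂ] Rpoly ⧸ (mIdeal * I) :=
    (Ideal.Quotient.mkₐ ℂ (mIdeal * I)).toLinearMap with hmkl
  have step1 : Submodule.restrictScalars ℂ (I.map (Ideal.Quotient.mk (mIdeal * I)))
      = Submodule.map mkl (Submodule.restrictScalars ℂ I) := by
    ext x
    rw [Submodule.restrictScalars_mem, Submodule.mem_map,
      Ideal.mem_map_iff_of_surjective _ Ideal.Quotient.mk_surjective]
    constructor
    · rintro ⟨y, hy, rfl⟩; exact ⟨y, hy, rfl⟩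
    · rintro ⟨y, hy, rfl⟩; exact ⟨y, hy, rfl⟩
  have step2 : MvPolynomial.restrictSupport ℂ (Sset lam.parts)
      = MvPolynomial.restrictSupport ℂ (Tset lam.parts)
        ⊔ MvPolynomial.restrictSupport ℂ (Sset lam.parts \ Tset lam.parts) := by
    rw [← restrictSupport_union, Set.union_diff_cancel (Tset_subset_Sset lam.parts)]
  have step3 : Submodule.map mkl (MvPolynomial.restrictSupport ℂ (Tset lam.parts)) = ⊥ := by
    rw [← hJT, eq_bot_iff]
    rintro x ⟨y, hy, rfl⟩
    rw [Submodule.mem_bot]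
    exact Ideal.Quotient.eq_zero_iff_mem.2 hy
  set g : ↥(MvPolynomial.restrictSupport ℂ (Sset lam.parts \ Tset lam.parts))
      →ₗ[ℂ] Rpoly ⧸ (mIdeal * I) :=
    mkl ∘ₗ (MvPolynomial.restrictSupport ℂ (Sset lam.parts \ Tset lam.parts)).subtype with hg
  have hinj : Function.Injective g := by
    rw [← LinearMap.ker_eq_bot, eq_bot_iff]
    intro x hx
    rw [LinearMap.mem_ker] at hx
    have hxJ : x.val ∈ mIdeal * I := Ideal.Quotient.eq_zero_iff_mem.1 hx
    rw [hI, mul_midl] at hxJ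
    have h1 : ↑(MvPolynomial.support x.val) ⊆ Tset lam.parts := hxJ
    have h2 : ↑(MvPolynomial.support x.val) ⊆ Sset lam.parts \ Tset lam.parts := x.2
    have h0 : x.val = 0 := by
      rw [← MvPolynomial.support_eq_empty]
      exact Finset.eq_empty_iff_forall_notMem.2 fun d hd => (h2 hd).2 (h1 hd)
    rw [Submodule.mem_bot]
    exact Subtype.ext h0
  have hrange : LinearMap.range g
      = Submodule.map mkl
          (MvPolynomial.restrictSupport ℂ (Sset lam.parts \ Tset lam.parts)) := by
    rw [hg, LinearMap.range_comp, Submodule.range_subtype]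
  calc mu I
      = Module.finrank ℂ (Submodule.restrictScalars ℂ
          (I.map (Ideal.Quotient.mk (mIdeal * I)))) := rfl
    _ = Module.finrank ℂ (Submodule.map mkl (Submodule.restrictScalars ℂ I)) := by
        rw [step1]
    _ = Module.finrank ℂ (Submodule.map mkl
          (MvPolynomial.restrictSupport ℂ (Sset lam.parts \ Tset lam.parts))) := by
        rw [hresI, step2, Submodule.map_sup, step3, bot_sup_eq]
    _ = Module.finrank ℂ (LinearMap.range g) := by rw [hrange]
    _ = Module.finrank ℂ
          (MvPolynomial.restrictSupport ℂ (Sset lam.parts \ Tset lam.parts)) :=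
        (LinearEquiv.finrank_eq (LinearEquiv.ofInjective g hinj)).symm
    _ = (Cfin lam.parts).card := finrank_supported_eq_card _ _ (diff_eq n lam)
    _ = lam.parts.toFinset.card + 1 := Cfin_card n lam

end YoungAux

/-- For a partition `λ` of `n`, the span `I_λ` of the monomials outside the Young
diagram of `λ` is an ideal of `R = ℂ[x,y]`, of colength `n`, whose minimal number of
generators `μ(I_λ) = dim_ℂ I_λ/(𝔪·I_λ)` equals `d(λ) + 1`, one more than the number
of distinct part sizes of `λ` (the number of concave corners of the diagram). -/
theorem stmt14 (n : ℕ) (lam : n.Partition) :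
    ∃ I : Ideal Rpoly, Submodule.restrictScalars ℂ I = youngSpan n lam ∧
      Module.finrank ℂ (Rpoly ⧸ I) = n ∧
      mu I = lam.parts.toFinset.card + 1 := by
  refine ⟨YoungAux.midl (YoungAux.Sset lam.parts) (YoungAux.Sset_up lam.parts), ?_, ?_, ?_⟩
  · rw [YoungAux.restrict_midl, YoungAux.youngSpan_eq]
  · exact YoungAux.finrank_quotient_eq n lam
  · exact YoungAux.mu_eq n lam

end
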